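/- The TN₁-Smarandache ruled surface χ(s,v) = (T+N₁)/√2 + v N₂ of a unit-speed curve γ with Bishop curvatures k₁, k₂ has Gaussian curvature K = -(1/2)·(k₁k₂/(k₁² + v²k₂² + √2 v k₁k₂))². -/

import Mathlib

open Real RealInnerProductSpace intervalIntegral
noncomputable section
abbrev E3 : Type := EuclideanSpace ℝ (Fin 3)
def cross3 (a b : E3) : E3 :=
  WithLp.toLp 2 ![a 1 * b 2 - a 2 * b 1, a 2 * b 0 - a 0 * b 2, a 0 * b 1 - a 1 * b 0]

lemma cross3_add_left (a a' b : E3) : cross3 (a + a') b = cross3 a b + cross3 a' b := by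
  ext i; fin_cases i <;> simp [cross3, PiLp.add_apply] <;> ring

lemma cross3_smul_left (r : ℝ) (a b : E3) : cross3 (r • a) b = r • cross3 a b := by
  ext i; fin_cases i <;> simp [cross3, PiLp.smul_apply, smul_eq_mul] <;> ring

lemma cross3_self (a : E3) : cross3 a a = 0 := by
  ext i; fin_cases i <;> simp [cross3] <;> ring

lemma cross3_triple (a b c : E3) : cross3 a (cross3 b c) = ⟪a,c⟫ • b - ⟪a,b⟫ • c := by
  ext i
  fin_cases i <;>
    simp [cross3, PiLp.inner_apply, RCLike.inner_apply, conj_trivial, Fin.sum_univ_three,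
      PiLp.sub_apply, PiLp.smul_apply, smul_eq_mul] <;> ring

lemma deriv_zero_off {E : Type*} [NormedAddCommGroup E] [NormedSpace ℝ E]
    {g : ℝ → E} {u₀ : ℝ} (h : ∀ u, u ≠ u₀ → g u = 0) (v : ℝ) : deriv g v = 0 := by
  by_cases hv : v = u₀
  · subst hv
    by_cases hg : g v = 0
    · have hfun : g = fun _ => 0 := funext fun u => by
        by_cases h' : u = v
        · rw [h']; exact hg
        · exact h u h'
      rw [hfun]; simp
    · apply deriv_zero_of_not_differentiableAt
      intro hd
      have h1 : Filter.Tendsto g (nhdsWithin v {v}ᶜ) (nhds (g v)) :=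
        hd.continuousAt.tendsto.mono_left nhdsWithin_le_nhds
      have h2 : Filter.Tendsto g (nhdsWithin v {v}ᶜ) (nhds 0) := by
        apply Filter.Tendsto.congr' _ tendsto_const_nhds
        filter_upwards [self_mem_nhdsWithin] with u hu
        exact (h u hu).symm
      exact hg (tendsto_nhds_unique h1 h2)
  · have hev : g =ᶠ[nhds v] fun _ => 0 := by
      filter_upwards [isOpen_compl_singleton.mem_nhds (by simpa using hv : v ∈ ({u₀} : Set ℝ)ᶜ)] with u hu
      exact h u hu
    rw [hev.deriv_eq]; simp

set_option maxHeartbeats 1000000 in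
/-- Gaussian curvature of the TN₁-Smarandache ruled surface. -/
theorem stmt_2
    (T N₁ N₂ : ℝ → E3) (k₁ k₂ : ℝ → ℝ)
    (hT : ∀ s, deriv T s = k₁ s • N₁ s + k₂ s • N₂ s)
    (hN₁ : ∀ s, deriv N₁ s = -(k₁ s) • T s)
    (hN₂ : ∀ s, deriv N₂ s = -(k₂ s) • T s)
    (hTu : ∀ s, ‖T s‖ = 1) (hN₁u : ∀ s, ‖N₁ s‖ = 1) (hN₂u : ∀ s, ‖N₂ s‖ = 1)
    (hTN₁ : ∀ s, ⟪T s, N₁ s⟫ = 0) (hTN₂ : ∀ s, ⟪T s, N₂ s⟫ = 0)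
    (hN₁N₂ : ∀ s, ⟪N₁ s, N₂ s⟫ = 0)
    (horient : ∀ s, cross3 (T s) (N₁ s) = N₂ s)
    :
    ∀ s v : ℝ,
      let χ : ℝ → ℝ → E3 := fun t u => (Real.sqrt 2)⁻¹ • (T t + N₁ t) + u • N₂ t
      let χs : E3 := deriv (fun t => χ t v) s
      let χv : E3 := deriv (fun u => χ s u) v
      let χss : E3 := deriv (fun t => deriv (fun t' => χ t' v) t) s
      let χsv : E3 := deriv (fun u => deriv (fun t => χ t u) s) v
      let χvv : E3 := deriv (fun u => deriv (fun u' => χ s u') u) v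
      let n : E3 := ‖cross3 χs χv‖⁻¹ • cross3 χs χv
      let Ec : ℝ := ⟪χs, χs⟫
      let Fc : ℝ := ⟪χs, χv⟫
      let Gc : ℝ := ⟪χv, χv⟫
      let Lc : ℝ := ⟪χss, n⟫
      let Mc : ℝ := ⟪χsv, n⟫
      let Nc : ℝ := ⟪χvv, n⟫
      let Kc : ℝ := (Lc * Nc - Mc ^ 2) / (Ec * Gc - Fc ^ 2)
      let Hc : ℝ := (Ec * Nc - 2 * Mc * Fc + Lc * Gc) / (2 * (Ec * Gc - Fc ^ 2))
      Kc = -(1/2) * (k₁ s * k₂ s / (k₁ s ^ 2 + v ^ 2 * k₂ s ^ 2 + Real.sqrt 2 * v * k₁ s * k₂ s)) ^ 2 := by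
  intro s v
  intro χ χs χv χss χsv χvv n Ec Fc Gc Lc Mc Nc Kc Hc
  have hs2 : Real.sqrt 2 * Real.sqrt 2 = 2 := Real.mul_self_sqrt (by norm_num)
  have hs2ne : Real.sqrt 2 ≠ 0 := by positivity
  have heT : T s ≠ 0 := fun h => by simpa [h] using hTu s
  have hee : ⟪T s, T s⟫ = 1 := by rw [real_inner_self_eq_norm_mul_norm, hTu s]; norm_num
  have hff : ⟪N₁ s, N₁ s⟫ = 1 := by rw [real_inner_self_eq_norm_mul_norm, hN₁u s]; norm_num
  have hgg : ⟪N₂ s, N₂ s⟫ = 1 := by rw [real_inner_self_eq_norm_mul_norm, hN₂u s]; norm_num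
  have hef := hTN₁ s
  have heg := hTN₂ s
  have hfg := hN₁N₂ s
  have hfe : ⟪N₁ s, T s⟫ = 0 := by rw [real_inner_comm]; exact hef
  have hge : ⟪N₂ s, T s⟫ = 0 := by rw [real_inner_comm]; exact heg
  have hgf : ⟪N₂ s, N₁ s⟫ = 0 := by rw [real_inner_comm]; exact hfg
  -- χv and χvv
  have hχu : ∀ u : ℝ, deriv (fun u' => χ s u') u = N₂ s := by
    intro u
    have h1 : HasDerivAt (fun u' : ℝ => χ s u') ((1:ℝ) • N₂ s) u :=
      ((hasDerivAt_id u).smul_const (N₂ s)).const_add ((Real.sqrt 2)⁻¹ • (T s + N₁ s))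
    simpa using h1.deriv
  have hχv : χv = N₂ s := hχu v
  have hχvv : χvv = 0 := by
    show deriv (fun u => deriv (fun u' => χ s u') u) v = 0
    have h2 : (fun u => deriv (fun u' => χ s u') u) = fun _ => N₂ s := funext hχu
    rw [h2, deriv_const]
  have hNc : Nc = 0 := by show ⟪χvv, n⟫ = 0; rw [hχvv, inner_zero_left]
  -- degenerate-case reduction
  have key0 : χsv = 0 → k₁ s * k₂ s = 0 →
      Kc = -(1/2) * (k₁ s * k₂ s / (k₁ s ^ 2 + v ^ 2 * k₂ s ^ 2 + Real.sqrt 2 * v * k₁ s * k₂ s)) ^ 2 := by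
    intro h1 h2
    have hMc : Mc = 0 := by show ⟪χsv, n⟫ = 0; rw [h1, inner_zero_left]
    show (Lc * Nc - Mc ^ 2) / (Ec * Gc - Fc ^ 2) = _
    rw [hNc, hMc, h2]
    simp
  by_cases hdN₂ : DifferentiableAt ℝ N₂ s
  case neg =>
    have h0 := deriv_zero_of_not_differentiableAt hdN₂
    rw [hN₂ s] at h0
    have hb : k₂ s = 0 := by
      rcases smul_eq_zero.mp h0 with h | h
      · linarith [neg_eq_zero.mp h]
      · exact absurd h heT
    have hone : ∃ u₀ : ℝ, ∀ u, u ≠ u₀ → deriv (fun t => χ t u) s = 0 := by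
      by_cases hex : ∃ u₀ : ℝ, DifferentiableAt ℝ (fun t => χ t u₀) s
      · obtain ⟨u₀, hu₀⟩ := hex
        refine ⟨u₀, fun u hu => ?_⟩
        apply deriv_zero_of_not_differentiableAt
        intro hd
        apply hdN₂
        have hsub : DifferentiableAt ℝ (fun t => (u - u₀) • N₂ t) s := by
          have heq : (fun t => (u - u₀) • N₂ t) = fun t => χ t u - χ t u₀ := by
            funext t
            show (u - u₀) • N₂ t =
              ((Real.sqrt 2)⁻¹ • (T t + N₁ t) + u • N₂ t) -
                ((Real.sqrt 2)⁻¹ • (T t + N₁ t) + u₀ • N₂ t)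
            module
          rw [heq]; exact hd.sub hu₀
        have heq2 : N₂ = fun t => (u - u₀)⁻¹ • ((u - u₀) • N₂ t) := by
          funext t; rw [smul_smul, inv_mul_cancel₀ (sub_ne_zero.mpr hu), one_smul]
        rw [heq2]
        exact hsub.const_smul ((u - u₀)⁻¹ : ℝ)
      · exact ⟨0, fun u _ => deriv_zero_of_not_differentiableAt (fun hd => hex ⟨u, hd⟩)⟩
    obtain ⟨u₀, hu₀⟩ := hone
    exact key0 (deriv_zero_off hu₀ v) (by rw [hb, mul_zero])
  case pos =>
    have hQzero : ¬ DifferentiableAt ℝ (fun t => (Real.sqrt 2)⁻¹ • (T t + N₁ t)) s → χsv = 0 := by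
      intro hQ
      have hzero : ∀ u : ℝ, deriv (fun t => χ t u) s = 0 := by
        intro u
        apply deriv_zero_of_not_differentiableAt
        intro hd
        apply hQ
        have heq : (fun t => (Real.sqrt 2)⁻¹ • (T t + N₁ t)) = fun t => χ t u - u • N₂ t := by
          funext t
          show _ = ((Real.sqrt 2)⁻¹ • (T t + N₁ t) + u • N₂ t) - u • N₂ t
          rw [add_sub_cancel_right]
        rw [heq]
        exact hd.sub (hdN₂.const_smul u)
      show deriv (fun u => deriv (fun t => χ t u) s) v = 0
      rw [funext hzero, deriv_const]
    by_cases hdT : DifferentiableAt ℝ T s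
    · by_cases hdN₁ : DifferentiableAt ℝ N₁ s
      · have hc : (Real.sqrt 2)⁻¹ = Real.sqrt 2 / 2 := by
          rw [eq_div_iff (by norm_num : (2:ℝ) ≠ 0), inv_mul_eq_div, div_eq_iff hs2ne, hs2]
        have hDT : HasDerivAt T (k₁ s • N₁ s + k₂ s • N₂ s) s := hT s ▸ hdT.hasDerivAt
        have hDN₁ : HasDerivAt N₁ (-(k₁ s) • T s) s := hN₁ s ▸ hdN₁.hasDerivAt
        have hDN₂ : HasDerivAt N₂ (-(k₂ s) • T s) s := hN₂ s ▸ hdN₂.hasDerivAt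
        have hGu : ∀ u : ℝ, deriv (fun t => χ t u) s
            = (Real.sqrt 2)⁻¹ • ((k₁ s • N₁ s + k₂ s • N₂ s) + -(k₁ s) • T s)
              + u • (-(k₂ s) • T s) := by
          intro u
          exact (((hDT.add hDN₁).const_smul ((Real.sqrt 2)⁻¹)).add (hDN₂.const_smul u)).deriv
        have hχs : χs = (-((Real.sqrt 2)⁻¹ * k₁ s + v * k₂ s)) • T s
            + ((Real.sqrt 2)⁻¹ * k₁ s) • N₁ s + ((Real.sqrt 2)⁻¹ * k₂ s) • N₂ s := by
          show deriv (fun t => χ t v) s = _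
          rw [hGu v]; module
        have hχsv : χsv = -(k₂ s) • T s := by
          show deriv (fun u => deriv (fun t => χ t u) s) v = _
          rw [funext hGu]
          have h1 : HasDerivAt (fun u : ℝ =>
              (Real.sqrt 2)⁻¹ • ((k₁ s • N₁ s + k₂ s • N₂ s) + -(k₁ s) • T s)
                + u • (-(k₂ s) • T s)) ((1:ℝ) • (-(k₂ s) • T s)) v :=
            ((hasDerivAt_id v).smul_const _).const_add _
          simpa using h1.deriv
        have hegC : cross3 (T s) (N₂ s) = -N₁ s := by
          rw [← horient s, cross3_triple, hef, hee]; simp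
        have hfgC : cross3 (N₁ s) (N₂ s) = T s := by
          rw [← horient s, cross3_triple, hff, hfe]; simp
        have hw : cross3 χs χv = ((Real.sqrt 2)⁻¹ * k₁ s) • T s
            + ((Real.sqrt 2)⁻¹ * k₁ s + v * k₂ s) • N₁ s := by
          rw [hχs, hχv, cross3_add_left, cross3_add_left, cross3_smul_left, cross3_smul_left,
            cross3_smul_left, hegC, hfgC, cross3_self]
          module
        set d : ℝ := k₁ s ^ 2 + v ^ 2 * k₂ s ^ 2 + Real.sqrt 2 * v * k₁ s * k₂ s with hd_def
        clear_value d
        have hwin : (⟪cross3 χs χv, cross3 χs χv⟫ : ℝ) = d := by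
          rw [hw, hd_def]
          simp only [inner_add_left, inner_add_right, real_inner_smul_left, real_inner_smul_right,
            hee, hff, hef, hfe, mul_one, mul_zero, add_zero, zero_add]
          rw [hc]
          linear_combination (k₁ s ^ 2 / 2) * hs2
        have hnorm : ‖cross3 χs χv‖ = Real.sqrt d := by
          rw [← hwin, real_inner_self_eq_norm_mul_norm, Real.sqrt_mul_self (norm_nonneg _)]
        have hEc : Ec = (-((Real.sqrt 2)⁻¹ * k₁ s + v * k₂ s)) ^ 2
            + ((Real.sqrt 2)⁻¹ * k₁ s) ^ 2 + ((Real.sqrt 2)⁻¹ * k₂ s) ^ 2 := by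
          show (⟪χs, χs⟫ : ℝ) = _
          rw [hχs]
          simp only [inner_add_left, inner_add_right, real_inner_smul_left, real_inner_smul_right,
            hee, hff, hgg, hef, hfe, heg, hge, hfg, hgf, mul_one, mul_zero, add_zero, zero_add]
          ring
        have hFc : Fc = (Real.sqrt 2)⁻¹ * k₂ s := by
          show (⟪χs, χv⟫ : ℝ) = _
          rw [hχs, hχv]
          simp only [inner_add_left, real_inner_smul_left, heg, hfg, hgg, mul_one, mul_zero,
            add_zero, zero_add]
        have hGc : Gc = 1 := by
          show (⟪χv, χv⟫ : ℝ) = _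
          rw [hχv]; exact hgg
        have hMc : Mc = -(k₂ s) * ((Real.sqrt d)⁻¹ * ((Real.sqrt 2)⁻¹ * k₁ s)) := by
          show (⟪χsv, ‖cross3 χs χv‖⁻¹ • cross3 χs χv⟫ : ℝ) = _
          rw [hχsv, hnorm, hw]
          simp only [real_inner_smul_left, real_inner_smul_right, inner_add_right,
            hee, hef, mul_one, mul_zero, add_zero]
          ring
        have hden : Ec * Gc - Fc ^ 2 = d := by
          rw [hEc, hFc, hGc, hd_def, hc]
          linear_combination (k₁ s ^ 2 / 2) * hs2
        have h2d : 2 * d = k₁ s ^ 2 + (k₁ s + Real.sqrt 2 * v * k₂ s) ^ 2 := by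
          rw [hd_def]
          linear_combination (-(v ^ 2 * k₂ s ^ 2)) * hs2
        have hdnn : (0:ℝ) ≤ d := by
          nlinarith [sq_nonneg (k₁ s + Real.sqrt 2 * v * k₂ s), sq_nonneg (k₁ s), h2d]
        show (Lc * Nc - Mc ^ 2) / (Ec * Gc - Fc ^ 2) = -(1/2) * (k₁ s * k₂ s / d) ^ 2
        rw [hNc, hden]
        by_cases hd0 : d = 0
        · have ha2 : k₁ s ^ 2 = 0 := by
            nlinarith [sq_nonneg (k₁ s + Real.sqrt 2 * v * k₂ s), sq_nonneg (k₁ s), h2d, hd0]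
          have ha : k₁ s = 0 := by
            nlinarith [sq_nonneg (k₁ s), ha2]
          rw [hMc, ha]
          norm_num
        · have hdpos : (0:ℝ) < d := lt_of_le_of_ne hdnn (Ne.symm hd0)
          have hsd : Real.sqrt d ^ 2 = d := Real.sq_sqrt hdnn
          have hsdne : Real.sqrt d ≠ 0 := by positivity
          have hinv2 : ((Real.sqrt d)⁻¹) ^ 2 = d⁻¹ := by rw [inv_pow, hsd]
          have hinv2' : ((Real.sqrt 2)⁻¹) ^ 2 = 2⁻¹ := by
            rw [inv_pow, Real.sq_sqrt (by norm_num : (0:ℝ) ≤ 2)]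
          have hMc2 : Mc ^ 2 = k₁ s ^ 2 * k₂ s ^ 2 / (2 * d) := by
            have e1 : Mc ^ 2 = (k₂ s) ^ 2 * ((Real.sqrt d)⁻¹) ^ 2
                * (((Real.sqrt 2)⁻¹) ^ 2 * (k₁ s) ^ 2) := by rw [hMc]; ring
            rw [e1, hinv2, hinv2']
            field_simp
          rw [hMc2]
          field_simp
          ring
      · have h0 := deriv_zero_of_not_differentiableAt hdN₁
        rw [hN₁ s] at h0
        have ha : k₁ s = 0 := by
          rcases smul_eq_zero.mp h0 with h | h
          · linarith [neg_eq_zero.mp h]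
          · exact absurd h heT
        have hQ : ¬ DifferentiableAt ℝ (fun t => (Real.sqrt 2)⁻¹ • (T t + N₁ t)) s := by
          intro hQd
          apply hdN₁
          have heq : N₁ = fun t => Real.sqrt 2 • ((Real.sqrt 2)⁻¹ • (T t + N₁ t)) - T t := by
            funext t
            rw [smul_smul, mul_inv_cancel₀ hs2ne, one_smul, add_sub_cancel_left]
          rw [heq]
          exact (hQd.const_smul (Real.sqrt 2)).sub hdT
        exact key0 (hQzero hQ) (by rw [ha, zero_mul])
    · have h0 := deriv_zero_of_not_differentiableAt hdT
      rw [hT s] at h0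
      have ha : k₁ s = 0 := by
        have h1 : (⟪k₁ s • N₁ s + k₂ s • N₂ s, N₁ s⟫ : ℝ) = 0 := by rw [h0, inner_zero_left]
        rw [inner_add_left, real_inner_smul_left, real_inner_smul_left, hff, hgf] at h1
        linarith
      have hb : k₂ s = 0 := by
        have h1 : (⟪k₁ s • N₁ s + k₂ s • N₂ s, N₂ s⟫ : ℝ) = 0 := by rw [h0, inner_zero_left]
        rw [inner_add_left, real_inner_smul_left, real_inner_smul_left, hgg, hfg] at h1
        linarith
      by_cases hQ : DifferentiableAt ℝ (fun t => (Real.sqrt 2)⁻¹ • (T t + N₁ t)) s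
      · have hE0 : deriv N₂ s = 0 := by rw [hN₂ s, hb]; simp
        have hGu : ∀ u : ℝ, deriv (fun t => χ t u) s
            = deriv (fun t => (Real.sqrt 2)⁻¹ • (T t + N₁ t)) s := by
          intro u
          have h2 : HasDerivAt N₂ (0:E3) s := by rw [← hE0]; exact hdN₂.hasDerivAt
          have h1 : HasDerivAt (fun t => χ t u)
              (deriv (fun t => (Real.sqrt 2)⁻¹ • (T t + N₁ t)) s + u • (0:E3)) s :=
            hQ.hasDerivAt.add (h2.const_smul u)
          have h3 : deriv (fun t => (Real.sqrt 2)⁻¹ • (T t + N₁ t)) s + u • (0:E3)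
              = deriv (fun t => (Real.sqrt 2)⁻¹ • (T t + N₁ t)) s := by
            rw [smul_zero, add_zero]
          rw [h1.deriv, h3]
        have hχsv0 : χsv = 0 := by
          show deriv (fun u => deriv (fun t => χ t u) s) v = 0
          rw [funext hGu, deriv_const]
        exact key0 hχsv0 (by rw [ha, zero_mul])
      · exact key0 (hQzero hQ) (by rw [ha, zero_mul])
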